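/- Let S be a positive face structure. If a ∈ S and a does not belong to δ(S) (the union of δ(x) over all faces x of S), then γ(a) ∉ ι(S) and δ(a) ∩ ι(S) = ∅, where ι(S) is the union of ι(x) = δδ(x) ∩ γδ(x) over all faces x of dimension ≥ 2. -/

import Mathlib

/-- A pre-hypergraph: dimension-indexed finite sets of faces together with
codomain functions `gam k : S_{k+1} → S_k` and domain assignments
`del k : S_{k+1} → Finset S_k`. -/
structure PreHG where
  faces : ℕ → Finset ℕ
  gam : ℕ → ℕ → ℕ
  del : ℕ → ℕ → Finset ℕ

namespace PreHG

/-- δ extended to sets of faces. -/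
def delS (S : PreHG) (k : ℕ) (A : Finset ℕ) : Finset ℕ := A.biUnion (S.del k)

/-- γ extended to sets of faces. -/
def gamS (S : PreHG) (k : ℕ) (A : Finset ℕ) : Finset ℕ := A.image (S.gam k)

/-- The set `ι(a) = δδ(a) ∩ γδ(a)` of internal faces of a face `a` of dimension `k+2`
(the result lives in dimension `k`). -/
def iota (S : PreHG) (k : ℕ) (a : ℕ) : Finset ℕ :=
  S.delS k (S.del (k+1) a) ∩ S.gamS k (S.del (k+1) a)

/-- One step of the upper order: `a ⊲⁺ b` on faces of dimension `k`:
there is `α` of dimension `k+1` with `a ∈ δ(α)` and `γ(α) = b`. -/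
def ltPlusOne (S : PreHG) (k : ℕ) (a b : ℕ) : Prop :=
  ∃ α ∈ S.faces (k+1), a ∈ S.del k α ∧ S.gam k α = b

/-- The upper order `<⁺` on faces of dimension `k` (transitive closure of `⊲⁺`). -/
def ltPlus (S : PreHG) (k : ℕ) : ℕ → ℕ → Prop :=
  Relation.TransGen (S.ltPlusOne k)

/-- One step of the lower order: `a ⊲⁻ b` iff `γ(a) ∈ δ(b)`, on faces of dimension `k`
(the empty relation in dimension 0). -/
def ltMinusOne (S : PreHG) : ℕ → ℕ → ℕ → Prop
  | 0, _, _ => False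
  | (k+1), a, b => a ∈ S.faces (k+1) ∧ b ∈ S.faces (k+1) ∧ S.gam k a ∈ S.del k b

/-- The lower order `<⁻` on faces of dimension `k` (transitive closure of `⊲⁻`). -/
def ltMinus (S : PreHG) (k : ℕ) : ℕ → ℕ → Prop :=
  Relation.TransGen (S.ltMinusOne k)

/-- Comparability in the upper order. -/
def perpPlus (S : PreHG) (k : ℕ) (a b : ℕ) : Prop := S.ltPlus k a b ∨ S.ltPlus k b a

/-- Comparability in the lower order. -/
def perpMinus (S : PreHG) (k : ℕ) (a b : ℕ) : Prop := S.ltMinus k a b ∨ S.ltMinus k b a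

/-- Iterated codomain `γ^{(l)}`: maps a face of dimension `l+m` down to dimension `l`. -/
def gDown (S : PreHG) (l : ℕ) : ℕ → ℕ → ℕ
  | 0, a => a
  | (m+1), a => gDown S l m (S.gam (l+m) a)

/-- The axioms of a positive hypergraph. -/
def IsHG (S : PreHG) : Prop :=
  (∀ k a, a ∈ S.faces (k+1) → S.gam k a ∈ S.faces k) ∧
  (∀ k a, a ∈ S.faces (k+1) → S.del k a ⊆ S.faces k) ∧
  (∀ k a, a ∈ S.faces (k+1) → (S.del k a).Nonempty) ∧
  (∀ a ∈ S.faces 1, (S.del 0 a).card = 1) ∧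
  (∃ N, ∀ k, N ≤ k → S.faces k = ∅)

/-- Globularity: for faces of dimension ≥ 2,
`{γγ(a)} = γδ(a) − δδ(a)` and `δγ(a) = δδ(a) − γδ(a)`. -/
def Globular (S : PreHG) : Prop :=
  ∀ k a, a ∈ S.faces (k+2) →
    ({S.gam k (S.gam (k+1) a)} : Finset ℕ)
        = S.gamS k (S.del (k+1) a) \ S.delS k (S.del (k+1) a) ∧
      S.del k (S.gam (k+1) a)
        = S.delS k (S.del (k+1) a) \ S.gamS k (S.del (k+1) a)

/-- Strictness: `<⁺` is irreflexive in every dimension. -/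
def StrictPlus (S : PreHG) : Prop := ∀ k, ∀ a ∈ S.faces k, ¬ S.ltPlus k a a

/-- `<⁺` is linear in dimension 0. -/
def LinearZero (S : PreHG) : Prop :=
  ∀ a ∈ S.faces 0, ∀ b ∈ S.faces 0, a = b ∨ S.ltPlus 0 a b ∨ S.ltPlus 0 b a

/-- Disjointness: no two faces of positive dimension are comparable in both orders. -/
def Disjointness (S : PreHG) : Prop :=
  ∀ k a b, a ∈ S.faces (k+1) → b ∈ S.faces (k+1) →
    ¬ (S.perpPlus (k+1) a b ∧ S.perpMinus (k+1) a b)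

/-- Pencil linearity: γ-fibers and δ-fibers are linearly ordered by `<⁺`. -/
def Pencil (S : PreHG) : Prop :=
  ∀ k x,
    (∀ a b, a ∈ S.faces (k+1) → b ∈ S.faces (k+1) →
      S.gam k a = x → S.gam k b = x → a = b ∨ S.perpPlus (k+1) a b) ∧
    (∀ a b, a ∈ S.faces (k+1) → b ∈ S.faces (k+1) →
      x ∈ S.del k a → x ∈ S.del k b → a = b ∨ S.perpPlus (k+1) a b)

/-- A positive face structure: a nonempty positive hypergraph satisfying
globularity, strictness, disjointness and pencil linearity. -/
def IsPFS (S : PreHG) : Prop :=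
  S.IsHG ∧ (S.faces 0).Nonempty ∧ S.Globular ∧ S.StrictPlus ∧ S.LinearZero ∧
    S.Disjointness ∧ S.Pencil

end PreHG

/- ## Auxiliary lemmas -/

namespace PreHG

open Relation

open scoped Classical

variable {S : PreHG}

/-- Target of a one-step `⊲⁺` is a face. -/
lemma mem_faces_of_ltPlusOne (hHG : S.IsHG) {m u z : ℕ} (h : S.ltPlusOne m u z) :
    z ∈ S.faces m := by
  obtain ⟨α, hα, _, hg⟩ := h
  exact hg ▸ hHG.1 m α hα

lemma mem_faces_left_of_ltPlusOne (hHG : S.IsHG) {m u z : ℕ} (h : S.ltPlusOne m u z) :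
    u ∈ S.faces m := by
  obtain ⟨α, hα, hu, _⟩ := h
  exact hHG.2.1 m α hα hu

lemma mem_faces_of_ltPlus (hHG : S.IsHG) {m u z : ℕ} (h : S.ltPlus m u z) :
    z ∈ S.faces m := by
  induction h with
  | single h => exact mem_faces_of_ltPlusOne hHG h
  | tail _ h _ => exact mem_faces_of_ltPlusOne hHG h

/-- The strict upper set of a face, used as a termination measure. -/
noncomputable def upset (S : PreHG) (m y : ℕ) : Finset ℕ :=
  (S.faces m).filter (fun z => S.ltPlus m y z)

lemma upset_card_lt (hHG : S.IsHG) (hst : S.StrictPlus) {m y z : ℕ}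
    (hy : y ∈ S.faces m) (h : S.ltPlus m y z) :
    (S.upset m z).card < (S.upset m y).card := by
  apply Finset.card_lt_card
  constructor
  · intro w hw
    rw [upset, Finset.mem_filter] at hw ⊢
    exact ⟨hw.1, h.trans hw.2⟩
  · intro hsub
    have hz : z ∈ S.upset m y := by
      rw [upset, Finset.mem_filter]
      exact ⟨mem_faces_of_ltPlus hHG h, h⟩
    have := hsub hz
    rw [upset, Finset.mem_filter] at this
    exact hst m z this.1 this.2

/-- Globularity split: for `b ∈ δ(Ξ)`, either `γ(b) = γγ(Ξ)` or `γ(b) ∈ δ(c)`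
for some `c ∈ δ(Ξ)`. -/
lemma glob_split (hHG : S.IsHG) (hG : S.Globular) {m Ξ b : ℕ}
    (hΞ : Ξ ∈ S.faces (m+2)) (hb : b ∈ S.del (m+1) Ξ) :
    S.gam m b = S.gam m (S.gam (m+1) Ξ) ∨
      ∃ c ∈ S.del (m+1) Ξ, S.gam m b ∈ S.del m c := by
  by_cases hd : S.gam m b ∈ S.delS m (S.del (m+1) Ξ)
  · right
    obtain ⟨c, hc, hcin⟩ := Finset.mem_biUnion.mp hd
    exact ⟨c, hc, hcin⟩
  · left
    have hg : S.gam m b ∈ S.gamS m (S.del (m+1) Ξ) := Finset.mem_image_of_mem _ hb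
    have h2 : S.gam m b ∈ S.gamS m (S.del (m+1) Ξ) \ S.delS m (S.del (m+1) Ξ) :=
      Finset.mem_sdiff.mpr ⟨hg, hd⟩
    rw [← (hG m Ξ hΞ).1] at h2
    exact Finset.mem_singleton.mp h2

/-- γ-transfer along `<⁺` : if `ζ <⁺ ξ` then `γζ = γξ` or `γζ <⁺ γξ`. -/
lemma gam_transfer (hS : S.IsPFS) :
    ∀ n m ζ ξ, (S.upset m (S.gam m ζ)).card ≤ n → S.ltPlus (m+1) ζ ξ →
      S.gam m ζ = S.gam m ξ ∨ S.ltPlus m (S.gam m ζ) (S.gam m ξ) := by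
  obtain ⟨hHG, -, hG, hst, -, -, -⟩ := hS
  intro n
  induction n using Nat.strong_induction_on with
  | _ n ih =>
  intro m ζ ξ hcard h
  have main : ∀ ζ0, S.ltPlus (m+1) ζ0 ξ → S.gam m ζ0 = S.gam m ζ →
      S.gam m ζ = S.gam m ξ ∨ S.ltPlus m (S.gam m ζ) (S.gam m ξ) := by
    intro ζ0 h0
    induction h0 using Relation.TransGen.head_induction_on with
    | single h1 =>
      rename_i ζ'
      intro hγ
      obtain ⟨Ξ, hΞ, hmem, hg⟩ := h1
      rcases glob_split hHG hG hΞ hmem with hEq | ⟨c, hc, hcin⟩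
      · left; rw [← hγ, hEq, hg]
      · have hcf : c ∈ S.faces (m+1) := hHG.2.1 (m+1) Ξ hΞ hc
        have hζf : S.gam m ζ ∈ S.faces m := by
          rw [← hγ]
          exact hHG.1 m ζ' (hHG.2.1 (m+1) Ξ hΞ hmem)
        have hone : S.ltPlusOne m (S.gam m ζ) (S.gam m c) := ⟨c, hcf, hγ ▸ hcin, rfl⟩
        have hlt : S.ltPlus m (S.gam m ζ) (S.gam m c) := TransGen.single hone
        have hcξ : S.ltPlus (m+1) c ξ := TransGen.single ⟨Ξ, hΞ, hc, hg⟩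
        have hlt' := upset_card_lt hHG hst hζf hlt
        rcases ih _ (lt_of_lt_of_le hlt' hcard) m c ξ le_rfl hcξ with h2 | h2
        · right; rw [← h2]; exact hlt
        · right; exact hlt.trans h2
    | head h1 hTG ihM =>
      rename_i ζ' w
      intro hγ
      obtain ⟨Ξ, hΞ, hmem, hg⟩ := h1
      rcases glob_split hHG hG hΞ hmem with hEq | ⟨c, hc, hcin⟩
      · exact ihM (by rw [← hγ, hEq, hg])
      · have hcf : c ∈ S.faces (m+1) := hHG.2.1 (m+1) Ξ hΞ hc
        have hζf : S.gam m ζ ∈ S.faces m := by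
          rw [← hγ]
          exact hHG.1 m ζ' (hHG.2.1 (m+1) Ξ hΞ hmem)
        have hone : S.ltPlusOne m (S.gam m ζ) (S.gam m c) := ⟨c, hcf, hγ ▸ hcin, rfl⟩
        have hlt : S.ltPlus m (S.gam m ζ) (S.gam m c) := TransGen.single hone
        have hcξ : S.ltPlus (m+1) c ξ := TransGen.head ⟨Ξ, hΞ, hc, hg⟩ hTG
        have hlt' := upset_card_lt hHG hst hζf hlt
        rcases ih _ (lt_of_lt_of_le hlt' hcard) m c ξ le_rfl hcξ with h2 | h2
        · right; rw [← h2]; exact hlt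
        · right; exact hlt.trans h2
  exact main ζ h rfl

/-- Upward linearity: two faces `<⁺`-above a common face are equal or comparable. -/
lemma up_linear (hS : S.IsPFS) :
    ∀ n m c z w, (S.upset m c).card ≤ n → S.ltPlus m c z → S.ltPlus m c w →
      z = w ∨ S.perpPlus m z w := by
  have hHG := hS.1
  have hst := hS.2.2.2.1
  have hpencil := hS.2.2.2.2.2.2
  intro n
  induction n using Nat.strong_induction_on with
  | _ n ih =>
  intro m c z w hcard hz hw
  obtain ⟨z₁, hz1, hz2'⟩ := Relation.TransGen.head'_iff.mp hz
  obtain ⟨w₁, hw1, hw2'⟩ := Relation.TransGen.head'_iff.mp hw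
  have hz2 : z = z₁ ∨ S.ltPlus m z₁ z := Relation.reflTransGen_iff_eq_or_transGen.mp hz2'
  have hw2 : w = w₁ ∨ S.ltPlus m w₁ w := Relation.reflTransGen_iff_eq_or_transGen.mp hw2'
  obtain ⟨ζ, hζf, hcζ, hgζ⟩ := hz1
  obtain ⟨ξ, hξf, hcξ, hgξ⟩ := hw1
  have hcf : c ∈ S.faces m := hHG.2.1 m ζ hζf hcζ
  have hcz₁ : S.ltPlus m c z₁ := Relation.TransGen.single ⟨ζ, hζf, hcζ, hgζ⟩
  have hcw₁ : S.ltPlus m c w₁ := Relation.TransGen.single ⟨ξ, hξf, hcξ, hgξ⟩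
  -- termination measure for recursive calls
  have hrec : ∀ c', S.ltPlus m c c' → S.ltPlus m c' z → S.ltPlus m c' w →
      z = w ∨ S.perpPlus m z w := by
    intro c' hcc' h1 h2
    have := upset_card_lt hHG hst hcf hcc'
    exact ih _ (lt_of_lt_of_le this hcard) m c' z w le_rfl h1 h2
  -- case on the comparison of the first steps
  have hcomp : z₁ = w₁ ∨ S.ltPlus m z₁ w₁ ∨ S.ltPlus m w₁ z₁ := by
    rcases (hpencil m c).2 ζ ξ hζf hξf hcζ hcξ with rfl | hp
    · left; rw [← hgζ, ← hgξ]
    · rcases hp with hp | hp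
      · rcases gam_transfer hS _ m ζ ξ le_rfl hp with hEq | hlt
        · left; rw [← hgζ, ← hgξ, hEq]
        · right; left; rw [← hgζ, ← hgξ]; exact hlt
      · rcases gam_transfer hS _ m ξ ζ le_rfl hp with hEq | hlt
        · left; rw [← hgζ, ← hgξ, hEq]
        · right; right; rw [← hgζ, ← hgξ]; exact hlt
  rcases hcomp with rfl | hzw | hwz
  · -- same first step
    rcases hz2 with rfl | hz2
    · rcases hw2 with rfl | hw2
      · exact Or.inl rfl
      · exact Or.inr (Or.inl hw2)
    · rcases hw2 with rfl | hw2
      · exact Or.inr (Or.inr hz2)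
      · exact hrec z₁ hcz₁ hz2 hw2
  · -- z₁ <⁺ w₁
    have hz₁w : S.ltPlus m z₁ w := by
      rcases hw2 with rfl | hw2
      · exact hzw
      · exact hzw.trans hw2
    rcases hz2 with rfl | hz2
    · exact Or.inr (Or.inl hz₁w)
    · exact hrec z₁ hcz₁ hz2 hz₁w
  · -- w₁ <⁺ z₁
    have hw₁z : S.ltPlus m w₁ z := by
      rcases hz2 with rfl | hz2
      · exact hwz
      · exact hwz.trans hz2
    rcases hw2 with rfl | hw2
    · exact Or.inr (Or.inr hw₁z)
    · exact hrec w₁ hcw₁ hw₁z hw2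

/-- A face not in the domain of any face is `<⁺`-maximal. -/
lemma not_ltPlus_of_notDom {k a : ℕ}
    (hnd : ∀ b ∈ S.faces (k+2), a ∉ S.del (k+1) b) {q : ℕ}
    (h : S.ltPlus (k+1) a q) : False := by
  obtain ⟨b, hb, -⟩ := Relation.TransGen.head'_iff.mp h
  obtain ⟨ζ, hζ, hmem, -⟩ := hb
  exact hnd ζ hζ hmem

end PreHG

/-- If `a ∈ S_{k+1}` is not in the domain of any face, then
`γ(a) ∉ ι(S)` and `δ(a) ∩ ι(S) = ∅`. -/
theorem stmt10 (S : PreHG) (hS : S.IsPFS) (k a : ℕ)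
    (ha : a ∈ S.faces (k+1))
    (hnd : ∀ b ∈ S.faces (k+2), a ∉ S.del (k+1) b) :
    ∀ x ∈ S.faces (k+2),
      S.gam k a ∉ S.iota k x ∧ ∀ t ∈ S.del k a, t ∉ S.iota k x := by
  have hHG := hS.1
  have hG := hS.2.2.1
  have hdisj := hS.2.2.2.2.2.1
  have hpencil := hS.2.2.2.2.2.2
  intro x hx
  have hvf : S.gam (k+1) x ∈ S.faces (k+1) := hHG.1 (k+1) x hx
  constructor
  · -- γ(a) ∉ ι(x)
    intro hι
    rw [PreHG.iota, Finset.mem_inter] at hι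
    obtain ⟨hδδ, hγδ⟩ := hι
    obtain ⟨α, hαx, hαin⟩ := Finset.mem_biUnion.mp hδδ
    obtain ⟨β, hβx, hβγ⟩ := Finset.mem_image.mp hγδ
    have hαf : α ∈ S.faces (k+1) := hHG.2.1 (k+1) x hx hαx
    have hβf : β ∈ S.faces (k+1) := hHG.2.1 (k+1) x hx hβx
    have hβne : β ≠ a := by
      intro h; exact hnd x hx (h ▸ hβx)
    -- pencil on the γ-fiber of γ(a)
    have hβa : S.ltPlus (k+1) β a := by
      rcases (hpencil k (S.gam k a)).1 β a hβf ha hβγ rfl with h | h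
      · exact absurd h hβne
      · rcases h with h | h
        · exact h
        · exact absurd h (S.not_ltPlus_of_notDom hnd)
    have hβv : S.ltPlus (k+1) β (S.gam (k+1) x) :=
      Relation.TransGen.single ⟨x, hx, hβx, rfl⟩
    rcases S.up_linear hS _ (k+1) β (S.gam (k+1) x) a le_rfl hβv hβa with hva | hva
    · -- γ(x) = a : contradicts globularity of x
      have h1 : S.gam k a ∈ ({S.gam k (S.gam (k+1) x)} : Finset ℕ) := by
        rw [hva]
        exact Finset.mem_singleton_self _
      rw [(hG k x hx).1, Finset.mem_sdiff] at h1
      exact h1.2 hδδ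
    · rcases hva with hva | hva
      swap
      · exact S.not_ltPlus_of_notDom hnd hva
      · -- γ(x) <⁺ a, hence α <⁺ a; but a ⊲⁻ α : contradiction with disjointness
        have hαa : S.ltPlus (k+1) α a :=
          Relation.TransGen.head ⟨x, hx, hαx, rfl⟩ hva
        refine hdisj k a α ha hαf ⟨Or.inr hαa, Or.inl ?_⟩
        exact Relation.TransGen.single ⟨ha, hαf, hαin⟩
  · -- δ(a) ∩ ι(x) = ∅
    intro t ht hι
    rw [PreHG.iota, Finset.mem_inter] at hι
    obtain ⟨hδδ, hγδ⟩ := hι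
    obtain ⟨α, hαx, hαin⟩ := Finset.mem_biUnion.mp hδδ
    obtain ⟨β, hβx, hβγ⟩ := Finset.mem_image.mp hγδ
    have hαf : α ∈ S.faces (k+1) := hHG.2.1 (k+1) x hx hαx
    have hβf : β ∈ S.faces (k+1) := hHG.2.1 (k+1) x hx hβx
    have hαne : α ≠ a := by
      intro h; exact hnd x hx (h ▸ hαx)
    -- pencil on the δ-fiber of t
    have hαa : S.ltPlus (k+1) α a := by
      rcases (hpencil k t).2 α a hαf ha hαin ht with h | h
      · exact absurd h hαne
      · rcases h with h | h
        · exact h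
        · exact absurd h (S.not_ltPlus_of_notDom hnd)
    -- β ⊲⁻ a, so β and a are not ⊥⁺-comparable
    have hβa_not : ¬ S.perpPlus (k+1) β a := by
      intro hp
      exact hdisj k β a hβf ha ⟨hp, Or.inl (Relation.TransGen.single ⟨hβf, ha, hβγ ▸ ht⟩)⟩
    have hαv : S.ltPlus (k+1) α (S.gam (k+1) x) :=
      Relation.TransGen.single ⟨x, hx, hαx, rfl⟩
    have hβv : S.ltPlus (k+1) β (S.gam (k+1) x) :=
      Relation.TransGen.single ⟨x, hx, hβx, rfl⟩
    rcases S.up_linear hS _ (k+1) α (S.gam (k+1) x) a le_rfl hαv hαa with hva | hva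
    · exact hβa_not (Or.inl (hva ▸ hβv))
    · rcases hva with hva | hva
      · exact hβa_not (Or.inl (hβv.trans hva))
      · exact S.not_ltPlus_of_notDom hnd hva
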